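/- arXiv:1607.04590 — 2 statements merged into one kernel-verified Lean document; each statement's English description precedes it below -/
import Mathlib

section
/- The sequence of generalized spiral configurations is quasi-uniform: there exist constants c > 0 and C > 0 such that for all N ≥ 2, the separation satisfies δ(ω_N) ≥ c·N^{−1/2} and the covering radius satisfies η(ω_N) ≤ C·N^{−1/2}. -/
open MeasureTheory Metric Filter Real Topology

noncomputable section

/-- Euclidean space `ℝ³`. -/
abbrev E3 := EuclideanSpace ℝ (Fin 3)

/-- The unit sphere `S² ⊂ ℝ³`. -/
def S2 : Set E3 := Metric.sphere 0 1

/-- Constructor for points of `ℝ³` from coordinates. -/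
def pt3 (a b c : ℝ) : E3 := (EuclideanSpace.equiv (Fin 3) ℝ).symm ![a, b, c]

/-- Polar angle `φ_k = arccos(1 - (2k-1)/N)` of the `k`-th generalized spiral point. -/
def spiralPhi (N k : ℕ) : ℝ := Real.arccos (1 - (2 * (k : ℝ) - 1) / N)

/-- Azimuth `θ_k = √(Nπ)·φ_k` of the `k`-th generalized spiral point. -/
def spiralTheta (N k : ℕ) : ℝ := Real.sqrt (N * π) * spiralPhi N k

/-- The `k`-th generalized spiral point on `S²`. -/
def spiralPt (N k : ℕ) : E3 :=
  pt3 (Real.sin (spiralPhi N k) * Real.cos (spiralTheta N k))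
      (Real.sin (spiralPhi N k) * Real.sin (spiralTheta N k))
      (Real.cos (spiralPhi N k))

/-- The generalized spiral configuration `ω_N = {x_1, …, x_N}`. -/
def spiralCfg (N : ℕ) : Set E3 := spiralPt N '' Set.Icc 1 N

/-- Separation `δ(ω) = min_{x ≠ y ∈ ω} |x - y|`. -/
def separation (ω : Set E3) : ℝ :=
  sInf ((fun p : E3 × E3 => dist p.1 p.2) '' {p | p.1 ∈ ω ∧ p.2 ∈ ω ∧ p.1 ≠ p.2})

/-- Covering radius `η(ω) = max_{y ∈ S²} min_{x ∈ ω} |x - y|`. -/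
def covering (ω : Set E3) : ℝ :=
  sSup ((fun y => Metric.infDist y ω) '' S2)

set_option maxHeartbeats 3000000

def sp (φ θ : ℝ) : E3 := pt3 (Real.sin φ * Real.cos θ) (Real.sin φ * Real.sin θ) (Real.cos φ)

lemma sin_half_sq (t : ℝ) : Real.sin (t/2) ^ 2 = 1/2 - Real.cos t / 2 := by
  have h := Real.sin_sq_eq_half_sub (x := t/2)
  rwa [show 2 * (t/2) = t by ring] at h

lemma two_sub_two_cos_le (t : ℝ) : 2 - 2 * Real.cos t ≤ t ^ 2 := by
  have h := sin_half_sq t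
  have h2 := Real.sin_sq_le_sq (x := t/2)
  nlinarith

lemma two_sub_two_cos_ge {t : ℝ} (h0 : 0 ≤ t) (hπ : t ≤ π) :
    (2/π * t) ^ 2 ≤ 2 - 2 * Real.cos t := by
  have hs : 2/π * (t/2) ≤ Real.sin (t/2) := Real.mul_le_sin (by linarith) (by linarith)
  have h := sin_half_sq t
  have hπ0 := Real.pi_pos
  have hsn : 0 ≤ 2/π * (t/2) := by positivity
  nlinarith [sq_nonneg (Real.sin (t/2) - 2/π*(t/2))]

lemma le_of_sq_le' {x y : ℝ} (h : x^2 ≤ y^2) (hy : 0 ≤ y) : x ≤ y := by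
  nlinarith [sq_nonneg (x - y), sq_nonneg (x + y)]

lemma arccos_le_of_cos_le {x t : ℝ} (ht0 : 0 ≤ t) (htπ : t ≤ π) (h : Real.cos t ≤ x) :
    Real.arccos x ≤ t := by
  by_contra h'
  push_neg at h'
  have hmono := Real.strictAntiOn_cos ⟨ht0, htπ⟩ ⟨Real.arccos_nonneg x, Real.arccos_le_pi x⟩ h'
  rcases le_or_gt x 1 with hx1 | hx1
  · rcases le_or_gt (-1) x with hx | hx
    · rw [Real.cos_arccos hx hx1] at hmono; linarith
    · linarith [Real.neg_one_le_cos t]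
  · rw [Real.arccos_eq_zero.2 (le_of_lt hx1)] at h'; linarith [ht0]

lemma dist_sp_sq (φ₁ θ₁ φ₂ θ₂ : ℝ) :
    dist (sp φ₁ θ₁) (sp φ₂ θ₂) ^ 2 =
      (2 - 2 * Real.cos (φ₁ - φ₂)) + 2 * Real.sin φ₁ * Real.sin φ₂ * (1 - Real.cos (θ₁ - θ₂)) := by
  rw [EuclideanSpace.dist_eq, Real.sq_sqrt (by positivity)]
  show ∑ i : Fin 3, dist ((sp φ₁ θ₁) i) ((sp φ₂ θ₂) i) ^ 2 = _
  simp only [Fin.sum_univ_three, Real.dist_eq, sq_abs]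
  show (Real.sin φ₁ * Real.cos θ₁ - Real.sin φ₂ * Real.cos θ₂)^2
      + (Real.sin φ₁ * Real.sin θ₁ - Real.sin φ₂ * Real.sin θ₂)^2
      + (Real.cos φ₁ - Real.cos φ₂)^2 = _
  rw [Real.cos_sub, Real.cos_sub]
  have h1 := Real.sin_sq_add_cos_sq φ₁
  have h2 := Real.sin_sq_add_cos_sq φ₂
  have h3 := Real.sin_sq_add_cos_sq θ₁
  have h4 := Real.sin_sq_add_cos_sq θ₂
  nlinarith [h1, h2, h3, h4]

lemma sp_dist_zero (φ θ : ℝ) : dist (sp φ θ) (0:E3) = 1 := by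
  rw [EuclideanSpace.dist_eq]
  have h : ∑ i : Fin 3, dist ((sp φ θ) i) ((0:E3) i) ^ 2 = 1 := by
    simp only [Fin.sum_univ_three, Real.dist_eq, sq_abs]
    show (Real.sin φ * Real.cos θ - 0)^2 + (Real.sin φ * Real.sin θ - 0)^2
        + (Real.cos φ - 0)^2 = 1
    have h1 := Real.sin_sq_add_cos_sq φ
    have h2 := Real.sin_sq_add_cos_sq θ
    nlinarith [h1, h2]
  rw [h, Real.sqrt_one]

lemma spiralPt_eq_sp (N k : ℕ) : spiralPt N k = sp (spiralPhi N k) (spiralTheta N k) := rfl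

lemma real_sin_add_sin (x y : ℝ) :
    Real.sin x + Real.sin y = 2 * Real.sin ((x+y)/2) * Real.cos ((x-y)/2) := by
  have h := Real.sin_sub_sin x (-y)
  rw [Real.sin_neg, sub_neg_eq_add, sub_neg_eq_add] at h
  rw [h]
  ring_nf

lemma spiralPhi_cos {N k : ℕ} (hN : 1 ≤ N) (h1 : 1 ≤ k) (h2 : k ≤ N) :
    Real.cos (spiralPhi N k) = 1 - (2*(k:ℝ)-1)/N := by
  have hN0 : (0:ℝ) < N := by exact_mod_cast Nat.lt_of_lt_of_le Nat.zero_lt_one hN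
  have hk1 : (1:ℝ) ≤ k := by exact_mod_cast h1
  have hkN : (k:ℝ) ≤ N := by exact_mod_cast h2
  apply Real.cos_arccos
  · have : (2*(k:ℝ)-1)/N ≤ 2 := by rw [div_le_iff₀ hN0]; nlinarith
    linarith
  · have : 0 ≤ (2*(k:ℝ)-1)/N := div_nonneg (by nlinarith) hN0.le
    linarith

section auxlemmas
variable {a b d δ n sm Δ sj sk D : ℝ}

lemma aux_ratio1 (hδ : 0 < δ) (hna : δ ≤ a) (hb2 : b ≤ 2 - δ)
    (hba : b = a + 2*d*δ) (hd1 : 1 ≤ d) :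
    1 - (1-b)^2 ≤ (1+d)^2*(1 - (1-a)^2) := by
  subst hba
  have h2dδ : 0 ≤ 2*d*δ := mul_nonneg (mul_nonneg two_pos.le (by linarith)) hδ.le
  have ha2 : a ≤ 2 := by linarith
  have k1 : (0:ℝ) ≤ (2*d*(a - δ))*(2 - a) :=
    mul_nonneg (mul_nonneg (by linarith) (by linarith)) (by linarith)
  have k2 : (0:ℝ) ≤ (2*d*δ)*(a + 2*d*δ) := mul_nonneg h2dδ (by linarith)
  have k3 : (0:ℝ) ≤ d^2*(a*(2 - a)) :=
    mul_nonneg (sq_nonneg d) (mul_nonneg (by linarith) (by linarith))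
  nlinarith [k1, k2, k3]

lemma aux_ratio2 (hδ : 0 < δ) (hna : δ ≤ a) (hb2 : b ≤ 2 - δ)
    (hba : b = a + 2*d*δ) (hd1 : 1 ≤ d) :
    1 - (1-a)^2 ≤ (1+d)^2*(1 - (1-b)^2) := by
  subst hba
  have h2dδ : 0 ≤ 2*d*δ := mul_nonneg (mul_nonneg two_pos.le (by linarith)) hδ.le
  have ha2 : a ≤ 2 := by linarith
  have hb0 : 0 ≤ a + 2*d*δ := by linarith
  have k1 : (0:ℝ) ≤ (2*d*(a+2*d*δ))*(2 - (a+2*d*δ) - δ) :=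
    mul_nonneg (mul_nonneg (by linarith) hb0) (by linarith)
  have k2 : (0:ℝ) ≤ (2 - a)*(2*d*δ) := mul_nonneg (by linarith) h2dδ
  have k3 : (0:ℝ) ≤ d^2*((a+2*d*δ)*(2 - (a+2*d*δ))) :=
    mul_nonneg (sq_nonneg d) (mul_nonneg hb0 (by linarith))
  nlinarith [k1, k2, k3]

lemma aux_S (hsm : 0 ≤ sm) (hΔ0 : 0 ≤ Δ) (hsin : Real.sin (Δ/2) ≤ Δ/2)
    (hcos : 1/2 ≤ Real.cos (Δ/2)) :
    2*sm*Real.sin (Δ/2) ≤ (2*sm*Real.cos (Δ/2))*Δ := by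
  nlinarith [mul_nonneg hsm (by linarith : (0:ℝ) ≤ Δ/2 - Real.sin (Δ/2)),
    mul_nonneg (mul_nonneg hsm hΔ0) (by linarith : (0:ℝ) ≤ Real.cos (Δ/2) - 1/2)]

lemma aux_sqn (hn : 0 < n) : (1/2/Real.sqrt n)^2 = 1/(4*n) := by
  rw [div_pow, div_pow, Real.sq_sqrt hn.le]; ring

lemma aux_case1 (hn : 0 < n) (hπD : 4/(π*n) ≤ D^2) : (1/2/Real.sqrt n)^2 ≤ D^2 := by
  rw [aux_sqn hn]
  have h6 : 1/(4*n) ≤ 4/(π*n) := by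
    rw [div_le_div_iff₀ (by positivity) (by positivity)]
    nlinarith [Real.pi_le_four, Real.pi_pos]
  linarith

lemma aux_fin (hn : 1 ≤ n) (hd1 : 1 ≤ d) (hsj0 : 0 ≤ sj) (hsk0 : 0 ≤ sk) (hΔ0 : 0 ≤ Δ)
    (hS : 2*d/n ≤ (sj+sk)*Δ) (h1 : sk ≤ (1+d)*sj) (h2 : sj ≤ (1+d)*sk)
    (hd2 : (4*n/π)*(sj*sk*Δ^2) ≤ D^2) : (1/2/Real.sqrt n)^2 ≤ D^2 := by
  have hn0 : (0:ℝ) < n := by linarith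
  have hπ0 := Real.pi_pos
  have hπ4 := Real.pi_le_four
  rw [aux_sqn hn0]
  set X := sj*sk*Δ^2 with hX
  have hX0 : 0 ≤ X := mul_nonneg (mul_nonneg hsj0 hsk0) (sq_nonneg Δ)
  have e1 : (2*d/n)^2 ≤ ((sj+sk)*Δ)^2 := pow_le_pow_left₀ (by positivity) hS 2
  have e2 : sj*sj*Δ^2 ≤ (1+d)*X := by
    have h : sj*sj ≤ (1+d)*(sj*sk) := by
      calc sj*sj ≤ sj*((1+d)*sk) := mul_le_mul_of_nonneg_left h2 hsj0
        _ = (1+d)*(sj*sk) := by ring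
    calc sj*sj*Δ^2 ≤ ((1+d)*(sj*sk))*Δ^2 := mul_le_mul_of_nonneg_right h (sq_nonneg Δ)
      _ = (1+d)*X := by rw [hX]; ring
  have e3 : sk*sk*Δ^2 ≤ (1+d)*X := by
    have h : sk*sk ≤ (1+d)*(sj*sk) := by
      calc sk*sk ≤ sk*((1+d)*sj) := mul_le_mul_of_nonneg_left h1 hsk0
        _ = (1+d)*(sj*sk) := by ring
    calc sk*sk*Δ^2 ≤ ((1+d)*(sj*sk))*Δ^2 := mul_le_mul_of_nonneg_right h (sq_nonneg Δ)
      _ = (1+d)*X := by rw [hX]; ring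
  have h1' : 4*d^2/n^2 ≤ (2*d+4)*X := by
    have expand : ((sj+sk)*Δ)^2 = sj*sj*Δ^2 + sk*sk*Δ^2 + 2*X := by rw [hX]; ring
    have e4 : (2*d/n)^2 = 4*d^2/n^2 := by ring
    linarith [e1, e2, e3]
  have hNX : 4*d^2 ≤ (2*d+4)*(n^2*X) := by
    have h := mul_le_mul_of_nonneg_left h1' (by positivity : (0:ℝ) ≤ n^2)
    calc 4*d^2 = n^2*(4*d^2/n^2) := by field_simp
      _ ≤ n^2*((2*d+4)*X) := h
      _ = (2*d+4)*(n^2*X) := by ring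
  have hπX : π ≤ 16*(n^2*X) := by
    have hd4 : (0:ℝ) < 2*d+4 := by linarith
    by_contra h'
    push_neg at h'
    have m1 : (2*d+4)*(16*(n^2*X)) < (2*d+4)*π := mul_lt_mul_of_pos_left h' hd4
    have m2 : (2*d+4)*π ≤ (2*d+4)*4 := mul_le_mul_of_nonneg_left hπ4 hd4.le
    have m3 : 16*(4*d^2) ≤ 16*((2*d+4)*(n^2*X)) := mul_le_mul_of_nonneg_left hNX (by norm_num)
    nlinarith [sq_nonneg (d-1)]
  have hfinal : 1/(4*n) ≤ (4*n/π)*X := by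
    rw [div_le_iff₀ (by positivity : (0:ℝ) < 4*n)]
    have e : (4*n/π)*X*(4*n) = (16*(n^2*X))/π := by ring
    rw [e, le_div_iff₀ hπ0, one_mul]
    exact hπX
  linarith

lemma sep_core {n d a b φj φk q D : ℝ}
    (hn2 : 2 ≤ n) (hd1 : 1 ≤ d)
    (hna : 1/n ≤ a) (hb2 : b ≤ 2 - 1/n) (hba : b - a = 2*d/n)
    (hφj0 : 0 ≤ φj) (hφjπ : φj ≤ π) (hφk0 : 0 ≤ φk) (hφkπ : φk ≤ π)
    (hcj : Real.cos φj = 1 - a) (hck : Real.cos φk = 1 - b)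
    (hq0 : 0 < q) (hq2 : q^2 = n*π)
    (hD0 : 0 ≤ D)
    (hdist : D^2 = (2 - 2*Real.cos (φk - φj))
      + 2*Real.sin φj*Real.sin φk*(1 - Real.cos (q*(φk - φj)))) :
    1/2/Real.sqrt n ≤ D := by
  have hn0 : (0:ℝ) < n := by linarith
  have hπ0 := Real.pi_pos
  have hπ4 := Real.pi_le_four
  have hπ3 := Real.pi_gt_three
  have hab : a < b := by
    have h1 : 0 < 2*d/n := by positivity
    linarith
  have hsj0 : 0 ≤ Real.sin φj := Real.sin_nonneg_of_nonneg_of_le_pi hφj0 hφjπ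
  have hsk0 : 0 ≤ Real.sin φk := Real.sin_nonneg_of_nonneg_of_le_pi hφk0 hφkπ
  have hsj2 : Real.sin φj ^ 2 = 1 - (1-a)^2 := by
    have h := Real.sin_sq_add_cos_sq φj; rw [hcj] at h; linarith
  have hsk2 : Real.sin φk ^ 2 = 1 - (1-b)^2 := by
    have h := Real.sin_sq_add_cos_sq φk; rw [hck] at h; linarith
  have hφle : φj ≤ φk := by
    by_contra h'
    push_neg at h'
    have := Real.strictAntiOn_cos ⟨hφk0, hφkπ⟩ ⟨hφj0, hφjπ⟩ h'
    rw [hcj, hck] at this; linarith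
  have hΔ0 : 0 ≤ φk - φj := by linarith
  have hΔπ : φk - φj ≤ π := by linarith
  have hsn0 : 0 < Real.sqrt n := Real.sqrt_pos.2 hn0
  have hsn2 : Real.sqrt n ^ 2 = n := Real.sq_sqrt hn0.le
  have hsπ2 : Real.sqrt π ^ 2 = π := Real.sq_sqrt hπ0.le
  have hsπ0 : 0 < Real.sqrt π := Real.sqrt_pos.2 hπ0
  have hqsplit : q = Real.sqrt n * Real.sqrt π := by
    rw [← Real.sqrt_sq hq0.le, hq2, Real.sqrt_mul hn0.le]
  apply le_of_sq_le' _ hD0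
  rcases le_or_gt (Real.sqrt π / Real.sqrt n) (φk - φj) with hcase | hcase
  · apply aux_case1 hn0
    have h1 : (2/π*(φk-φj))^2 ≤ 2 - 2*Real.cos (φk-φj) := two_sub_two_cos_ge hΔ0 hΔπ
    have h2 : 2 - 2*Real.cos (φk - φj) ≤ D^2 := by
      rw [hdist]
      have := mul_nonneg (mul_nonneg hsj0 hsk0)
        (by linarith [Real.cos_le_one (q*(φk-φj))] : (0:ℝ) ≤ 1 - Real.cos (q*(φk-φj)))
      linarith
    have h4 : (2/π*(Real.sqrt π/Real.sqrt n))^2 ≤ (2/π*(φk-φj))^2 := by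
      apply pow_le_pow_left₀ (by positivity) _ 2
      have := mul_le_mul_of_nonneg_left hcase (by positivity : (0:ℝ) ≤ 2/π)
      linarith
    have h5 : (2/π*(Real.sqrt π/Real.sqrt n))^2 = 4/(π*n) := by
      rw [mul_pow, div_pow, div_pow, hsπ2, hsn2]
      field_simp; ring
    linarith
  · have hm0 : 0 ≤ (φj+φk)/2 := by linarith
    have hmπ : (φj+φk)/2 ≤ π := by linarith
    have hsm0 : 0 ≤ Real.sin ((φj+φk)/2) := Real.sin_nonneg_of_nonneg_of_le_pi hm0 hmπ
    have hcc : b - a = 2 * Real.sin ((φj+φk)/2) * Real.sin ((φk-φj)/2) := by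
      have h := Real.cos_sub_cos φj φk
      rw [hcj, hck] at h
      have e : Real.sin ((φj - φk)/2) = -Real.sin ((φk-φj)/2) := by
        rw [show (φj - φk)/2 = -((φk-φj)/2) by ring, Real.sin_neg]
      rw [e] at h
      linarith
    have hss : Real.sin φj + Real.sin φk
        = 2 * Real.sin ((φj+φk)/2) * Real.cos ((φk-φj)/2) := by
      have h := real_sin_add_sin φj φk
      have e : Real.cos ((φj - φk)/2) = Real.cos ((φk-φj)/2) := by
        rw [show (φj - φk)/2 = -((φk-φj)/2) by ring, Real.cos_neg]
      rw [e] at h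
      exact h
    have hΔub : φk - φj ≤ 2 := by
      have h1 : Real.sqrt π / Real.sqrt n ≤ Real.sqrt π / Real.sqrt 2 := by
        apply div_le_div_of_nonneg_left hsπ0.le (Real.sqrt_pos.2 two_pos)
        exact Real.sqrt_le_sqrt hn2
      have h2 : Real.sqrt π ≤ 2 := by
        rw [show (2:ℝ) = Real.sqrt 4 by
          rw [show (4:ℝ) = 2^2 by norm_num, Real.sqrt_sq two_pos.le]]
        exact Real.sqrt_le_sqrt hπ4
      have h3 : (1:ℝ) ≤ Real.sqrt 2 := by
        rw [show (1:ℝ) = Real.sqrt 1 by rw [Real.sqrt_one]]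
        exact Real.sqrt_le_sqrt one_le_two
      have h4 : Real.sqrt π / Real.sqrt 2 ≤ 2/1 := div_le_div₀ (by norm_num) h2 one_pos h3
      linarith [hcase.le]
    have hcoshalf : 1/2 ≤ Real.cos ((φk-φj)/2) := by
      have h1 : (φk-φj)/2 ≤ π/3 := by linarith
      have h := Real.cos_le_cos_of_nonneg_of_le_pi (by linarith : (0:ℝ) ≤ (φk-φj)/2)
        (by linarith : π/3 ≤ π) h1
      rwa [Real.cos_pi_div_three] at h
    have hsinhalf_le : Real.sin ((φk-φj)/2) ≤ (φk-φj)/2 := Real.sin_le (by linarith)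
    have hS : 2*d/n ≤ (Real.sin φj + Real.sin φk) * (φk-φj) := by
      rw [← hba, hcc, hss]
      exact aux_S hsm0 hΔ0 hsinhalf_le hcoshalf
    have hδ0 : (0:ℝ) < 1/n := by positivity
    have hba' : b = a + 2*d*(1/n) := by
      rw [show 2*d*(1/n) = 2*d/n by ring]
      linarith
    have hsk_le : Real.sin φk ≤ (1+d)*Real.sin φj := by
      apply le_of_sq_le' _ (mul_nonneg (by linarith) hsj0)
      rw [mul_pow, hsk2, hsj2]
      exact aux_ratio1 hδ0 hna hb2 hba' hd1
    have hsj_le : Real.sin φj ≤ (1+d)*Real.sin φk := by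
      apply le_of_sq_le' _ (mul_nonneg (by linarith) hsk0)
      rw [mul_pow, hsk2, hsj2]
      exact aux_ratio2 hδ0 hna hb2 hba' hd1
    have hu0 : 0 ≤ q*(φk-φj) := mul_nonneg hq0.le hΔ0
    have huπ : q*(φk-φj) ≤ π := by
      have h1 : q*(φk-φj) ≤ q*(Real.sqrt π/Real.sqrt n) :=
        mul_le_mul_of_nonneg_left hcase.le hq0.le
      have e : q*(Real.sqrt π/Real.sqrt n) = π := by
        rw [hqsplit,
          show Real.sqrt n * Real.sqrt π * (Real.sqrt π / Real.sqrt n)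
             = (Real.sqrt π * Real.sqrt π) * (Real.sqrt n / Real.sqrt n) by ring,
          div_self hsn0.ne', mul_one, Real.mul_self_sqrt hπ0.le]
      linarith
    have hcosq : (2/π*(q*(φk-φj)))^2 ≤ 2 - 2*Real.cos (q*(φk-φj)) := two_sub_two_cos_ge hu0 huπ
    have hd2 : (4*n/π)*(Real.sin φj*Real.sin φk*(φk-φj)^2) ≤ D^2 := by
      rw [hdist]
      have h1 : Real.sin φj*Real.sin φk*((2/π*(q*(φk-φj)))^2)
          ≤ Real.sin φj*Real.sin φk*(2 - 2*Real.cos (q*(φk-φj))) :=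
        mul_le_mul_of_nonneg_left hcosq (mul_nonneg hsj0 hsk0)
      have e1 : Real.sin φj*Real.sin φk*((2/π*(q*(φk-φj)))^2)
          = (4/π^2)*(q^2)*(Real.sin φj*Real.sin φk*(φk-φj)^2) := by ring
      have e2 : (4/π^2)*(q^2)*(Real.sin φj*Real.sin φk*(φk-φj)^2)
          = (4*n/π)*(Real.sin φj*Real.sin φk*(φk-φj)^2) := by
        rw [hq2]; field_simp
      have e3 : Real.sin φj*Real.sin φk*(2 - 2*Real.cos (q*(φk-φj)))
          = 2*Real.sin φj*Real.sin φk*(1 - Real.cos (q*(φk-φj))) := by ring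
      have h4 : 0 ≤ 2 - 2*Real.cos (φk-φj) := by linarith [Real.cos_le_one (φk-φj)]
      linarith [h1, e1, e2, e3, h4]
    exact aux_fin (by linarith) hd1 hsj0 hsk0 hΔ0 hS hsk_le hsj_le hd2

end auxlemmas

set_option maxHeartbeats 1000000 in
lemma sep_main {N j k : ℕ} (hN : 2 ≤ N) (hj : 1 ≤ j) (hjk : j < k) (hkN : k ≤ N) :
    1/2 / Real.sqrt N ≤ dist (spiralPt N j) (spiralPt N k) := by
  have hN0 : (0:ℝ) < N := by exact_mod_cast Nat.lt_of_lt_of_le Nat.zero_lt_two hN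
  have hπ0 := Real.pi_pos
  have hdj : (1:ℝ) ≤ (k:ℝ) - j := by
    have : (j:ℝ) + 1 ≤ k := by exact_mod_cast hjk
    linarith
  have hj1 : (1:ℝ) ≤ j := by exact_mod_cast hj
  have hkNr : (k:ℝ) ≤ N := by exact_mod_cast hkN
  apply sep_core (a := (2*(j:ℝ)-1)/N) (b := (2*(k:ℝ)-1)/N) (d := (k:ℝ)-j)
    (φj := spiralPhi N j) (φk := spiralPhi N k) (q := Real.sqrt ((N:ℝ)*π))
  · exact_mod_cast hN
  · exact hdj
  · rw [div_le_div_iff₀ hN0 hN0]; nlinarith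
  · rw [div_le_iff₀ hN0, sub_mul, one_div, inv_mul_cancel₀ hN0.ne']; nlinarith
  · field_simp; ring
  · exact Real.arccos_nonneg _
  · exact Real.arccos_le_pi _
  · exact Real.arccos_nonneg _
  · exact Real.arccos_le_pi _
  · exact spiralPhi_cos (by omega) hj (by omega)
  · exact spiralPhi_cos (by omega) (by omega) hkN
  · exact Real.sqrt_pos.2 (by positivity)
  · exact Real.sq_sqrt (by positivity)
  · exact dist_nonneg
  · rw [spiralPt_eq_sp, spiralPt_eq_sp, dist_sp_sq]
    have e1 : Real.cos (spiralPhi N j - spiralPhi N k)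
        = Real.cos (spiralPhi N k - spiralPhi N j) := by
      rw [← Real.cos_neg (spiralPhi N j - spiralPhi N k)]; congr 1; ring
    have e2 : Real.cos (spiralTheta N j - spiralTheta N k)
        = Real.cos (Real.sqrt ((N:ℝ)*π)*(spiralPhi N k - spiralPhi N j)) := by
      rw [← Real.cos_neg (spiralTheta N j - spiralTheta N k)]
      congr 1
      unfold spiralTheta
      push_cast
      ring
    rw [e1, e2]

lemma dist_sp_same_theta (φ₁ φ₂ θ : ℝ) : dist (sp φ₁ θ) (sp φ₂ θ) ≤ |φ₁ - φ₂| := by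
  apply le_of_sq_le' _ (abs_nonneg _)
  rw [dist_sp_sq, sq_abs]
  have h := two_sub_two_cos_le (φ₁ - φ₂)
  simp only [sub_self, Real.cos_zero]
  nlinarith

lemma dist_sp_same_phi (φ θ₁ θ₂ : ℝ) (hφ : 0 ≤ Real.sin φ) :
    dist (sp φ θ₁) (sp φ θ₂) ≤ Real.sin φ * |θ₁ - θ₂| := by
  apply le_of_sq_le' _ (by positivity)
  rw [dist_sp_sq]
  have h1 := two_sub_two_cos_le (θ₁ - θ₂)
  simp only [sub_self, Real.cos_zero]
  have e : (Real.sin φ * |θ₁ - θ₂|)^2 = Real.sin φ ^ 2 * (θ₁-θ₂)^2 := by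
    rw [mul_pow, sq_abs]
  nlinarith [sq_nonneg (Real.sin φ), sq_abs (θ₁ - θ₂)]

lemma real_sin_sub_le (x y : ℝ) : Real.sin x - Real.sin y ≤ |x - y| := by
  rw [Real.sin_sub_sin]
  have h1 : |Real.sin ((x-y)/2)| ≤ |(x-y)/2| := Real.abs_sin_le_abs
  have h2 : |Real.cos ((x+y)/2)| ≤ 1 := Real.abs_cos_le_one _
  have h3 : |(x-y)/2| = |x-y|/2 := by rw [abs_div, abs_two]
  have h4 : Real.sin ((x-y)/2) * Real.cos ((x+y)/2)
      ≤ |Real.sin ((x-y)/2)| * |Real.cos ((x+y)/2)| := by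
    calc Real.sin ((x-y)/2) * Real.cos ((x+y)/2)
        ≤ |Real.sin ((x-y)/2) * Real.cos ((x+y)/2)| := le_abs_self _
      _ = |Real.sin ((x-y)/2)| * |Real.cos ((x+y)/2)| := abs_mul _ _
  have h5 : |Real.sin ((x-y)/2)| * |Real.cos ((x+y)/2)| ≤ |(x-y)/2| * 1 :=
    mul_le_mul h1 h2 (abs_nonneg _) (abs_nonneg _)
  nlinarith

lemma mem_S2_sum {y : E3} (hy : dist y (0:E3) = 1) : (y 0)^2+(y 1)^2+(y 2)^2 = 1 := by
  rw [EuclideanSpace.dist_eq] at hy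
  have h2 : (∑ i : Fin 3, dist (y i) ((0:E3) i)^2) = 1 := by
    have h := congrArg (·^2) hy
    simp only at h
    rwa [Real.sq_sqrt (by positivity), one_pow] at h
  simpa [Fin.sum_univ_three, Real.dist_eq, sq_abs] using h2

lemma sp_coords (y : E3) (hy : (y 0)^2+(y 1)^2+(y 2)^2 = 1) :
    ∃ φs θs, 0 ≤ φs ∧ φs ≤ π ∧ y = sp φs θs := by
  have hz1 : -1 ≤ y 2 := by nlinarith [sq_nonneg (y 0), sq_nonneg (y 1), sq_nonneg (y 2 + 1)]
  have hz1' : y 2 ≤ 1 := by nlinarith [sq_nonneg (y 0), sq_nonneg (y 1), sq_nonneg (y 2 - 1)]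
  refine ⟨Real.arccos (y 2), Complex.arg ⟨y 0, y 1⟩,
    Real.arccos_nonneg _, Real.arccos_le_pi _, ?_⟩
  have habs : ‖(⟨y 0, y 1⟩ : ℂ)‖ = Real.sin (Real.arccos (y 2)) := by
    rw [Real.sin_arccos, Complex.norm_def, Complex.normSq_mk]
    congr 1
    nlinarith
  refine PiLp.ext fun i => ?_
  fin_cases i
  · show y 0 = Real.sin (Real.arccos (y 2)) * Real.cos (Complex.arg ⟨y 0, y 1⟩)
    rw [← habs]
    exact (Complex.norm_mul_cos_arg ⟨y 0, y 1⟩).symm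
  · show y 1 = Real.sin (Real.arccos (y 2)) * Real.sin (Complex.arg ⟨y 0, y 1⟩)
    rw [← habs]
    exact (Complex.norm_mul_sin_arg ⟨y 0, y 1⟩).symm
  · show y 2 = Real.cos (Real.arccos (y 2))
    exact (Real.cos_arccos hz1 hz1').symm

lemma aux_t (q θs α : ℝ) (hq : 0 < q) :
    ∃ t, α ≤ t ∧ t ≤ α + 2*π/q ∧ Real.cos (q*t) = Real.cos θs ∧ Real.sin (q*t) = Real.sin θs := by
  have hπ0 := Real.pi_pos
  set w := (θs - q*α)/(2*π) with hw
  refine ⟨α + 2*π*Int.fract w/q, ?_, ?_, ?_, ?_⟩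
  · have : 0 ≤ 2*π*Int.fract w/q :=
      div_nonneg (by nlinarith [Int.fract_nonneg w] : (0:ℝ) ≤ 2*π*Int.fract w) hq.le
    linarith
  · have h1 : Int.fract w < 1 := Int.fract_lt_one w
    have : 2*π*Int.fract w/q ≤ 2*π/q := by
      rw [div_le_div_iff₀ hq hq]
      nlinarith [mul_nonneg (mul_nonneg
        (by linarith [Int.fract_lt_one w] : (0:ℝ) ≤ 1 - Int.fract w) hπ0.le) hq.le]
    linarith
  · have e : q*(α + 2*π*Int.fract w/q) = θs - (⌊w⌋:ℝ)*(2*π) := by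
      rw [← Int.self_sub_floor w, hw]
      field_simp
      ring
    rw [e, Real.cos_sub_int_mul_two_pi]
  · have e : q*(α + 2*π*Int.fract w/q) = θs - (⌊w⌋:ℝ)*(2*π) := by
      rw [← Int.self_sub_floor w, hw]
      field_simp
      ring
    rw [e, Real.sin_sub_int_mul_two_pi]

lemma aux_dA {φs θs t q B : ℝ} (hc : Real.cos (q*t) = Real.cos θs)
    (hs : Real.sin (q*t) = Real.sin θs) (habs : (φs - t)^2 ≤ B^2) (hB : 0 ≤ B) :
    dist (sp φs θs) (sp t (q*t)) ≤ B := by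
  apply le_of_sq_le' _ hB
  rw [dist_sp_sq]
  have e : Real.cos (θs - q*t) = 1 := by
    rw [Real.cos_sub, hc, hs]
    rw [← Real.sin_sq_add_cos_sq θs]
    ring
  rw [e]
  have h := two_sub_two_cos_le (φs - t)
  nlinarith

lemma aux_covB {φk t n : ℝ} (hn : 0 < n) (h0 : 0 ≤ φk) (hkt : φk ≤ t) (htπ : t ≤ π)
    (hcos : Real.cos φk - Real.cos t ≤ 2/n) :
    (t - φk)^2 ≤ π^2/n ∧ Real.sin φk * (t - φk) ≤ π/n + (t-φk)^2/2 := by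
  have hπ0 := Real.pi_pos
  obtain ⟨Δ, hΔ⟩ : ∃ x, x = t - φk := ⟨_, rfl⟩
  rw [← hΔ]
  have hΔ0 : 0 ≤ Δ := by rw [hΔ]; linarith
  have hΔπ : Δ ≤ π := by rw [hΔ]; linarith
  have hmid : Real.cos φk - Real.cos t = 2 * Real.sin ((φk+t)/2) * Real.sin (Δ/2) := by
    have h := Real.cos_sub_cos φk t
    have e : Real.sin ((φk - t)/2) = -Real.sin (Δ/2) := by
      rw [show (φk - t)/2 = -(Δ/2) by rw [hΔ]; ring, Real.sin_neg]
    rw [e] at h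
    linarith
  have hm0 : 0 ≤ (φk+t)/2 := by linarith
  have hmπ : (φk+t)/2 ≤ π := by linarith
  have hsm0 : 0 ≤ Real.sin ((φk+t)/2) := Real.sin_nonneg_of_nonneg_of_le_pi hm0 hmπ
  have hsm : Δ/π ≤ Real.sin ((φk+t)/2) := by
    rcases le_or_gt ((φk+t)/2) (π/2) with hc | hc
    · have h := Real.mul_le_sin hm0 hc
      have : Δ/2 ≤ (φk+t)/2 := by linarith
      calc Δ/π = 2/π * (Δ/2) := by ring
        _ ≤ 2/π * ((φk+t)/2) := by
            apply mul_le_mul_of_nonneg_left this (by positivity)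
        _ ≤ Real.sin ((φk+t)/2) := h
    · have h0' : 0 ≤ π - (φk+t)/2 := by linarith
      have hc' : π - (φk+t)/2 ≤ π/2 := by linarith
      have h := Real.mul_le_sin h0' hc'
      have e : Real.sin (π - (φk+t)/2) = Real.sin ((φk+t)/2) := Real.sin_pi_sub _
      have : Δ/2 ≤ π - (φk+t)/2 := by linarith
      calc Δ/π = 2/π * (Δ/2) := by ring
        _ ≤ 2/π * (π - (φk+t)/2) := by
            apply mul_le_mul_of_nonneg_left this (by positivity)
        _ ≤ Real.sin (π - (φk+t)/2) := h
        _ = Real.sin ((φk+t)/2) := e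
  have hsd : Δ/π ≤ Real.sin (Δ/2) := by
    have h := Real.mul_le_sin (by linarith : (0:ℝ) ≤ Δ/2) (by linarith : Δ/2 ≤ π/2)
    calc Δ/π = 2/π * (Δ/2) := by ring
      _ ≤ Real.sin (Δ/2) := h
  have hsd0 : 0 ≤ Real.sin (Δ/2) := le_trans (by positivity) hsd
  have key : 2*(Δ/π)*(Δ/π) ≤ 2/n := by
    calc 2*(Δ/π)*(Δ/π) ≤ 2*Real.sin ((φk+t)/2)*Real.sin (Δ/2) := by
          apply mul_le_mul (by
            apply mul_le_mul_of_nonneg_left hsm (by norm_num)) hsd (by positivity) (by positivity)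
      _ = Real.cos φk - Real.cos t := hmid.symm
      _ ≤ 2/n := hcos
  constructor
  · have e : 2*(Δ/π)*(Δ/π) = 2*Δ^2/π^2 := by ring
    rw [e, div_le_div_iff₀ (by positivity) hn] at key
    rw [le_div_iff₀ hn]
    nlinarith [key]
  · have hsmΔ : Real.sin ((φk+t)/2) * Δ ≤ π/n := by
      have h1 : Real.sin ((φk+t)/2) * (Δ/π) ≤ Real.sin ((φk+t)/2) * Real.sin (Δ/2) :=
        mul_le_mul_of_nonneg_left hsd hsm0
      have h2' : 2*(Real.sin ((φk+t)/2) * Real.sin (Δ/2)) ≤ 2/n := by linarith [hmid, hcos]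
      have h1' : 2*(Real.sin ((φk+t)/2) * (Δ/π)) ≤ 2/n := by linarith [h1, h2']
      have e1 : Real.sin ((φk+t)/2) * Δ = (π/2) * (2*(Real.sin ((φk+t)/2)*(Δ/π))) := by
        field_simp
      have e2 : (π/2) * (2/n) = π/n := by
        field_simp
      calc Real.sin ((φk+t)/2) * Δ = (π/2)*(2*(Real.sin ((φk+t)/2)*(Δ/π))) := e1
        _ ≤ (π/2)*(2/n) := mul_le_mul_of_nonneg_left h1' (by positivity)
        _ = π/n := e2
    have hsk_le : Real.sin φk ≤ Real.sin ((φk+t)/2) + Δ/2 := by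
      have h := real_sin_sub_le φk ((φk+t)/2)
      have e : |φk - (φk+t)/2| = Δ/2 := by
        rw [abs_of_nonpos (by linarith), hΔ]; ring
      rw [e] at h
      linarith
    calc Real.sin φk * Δ ≤ (Real.sin ((φk+t)/2) + Δ/2) * Δ :=
          mul_le_mul_of_nonneg_right hsk_le hΔ0
      _ = Real.sin ((φk+t)/2) * Δ + Δ^2/2 := by ring
      _ ≤ π/n + Δ^2/2 := by linarith

lemma aux_total {s n q Δ SK φ1 : ℝ} (hs : 50 ≤ s) (hn : s^2 = n)
    (hq1 : s ≤ q) (hq2 : q ≤ 2*s) (hΔ : Δ ≤ π/s) (hΔ0 : 0 ≤ Δ)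
    (hSK0 : 0 ≤ SK) (hSK : SK ≤ π/n + π^2/(2*n)) (hφ1 : φ1 ≤ 4/s) :
    (φ1 + 2*(2*π/q)) + (Δ + q*SK) ≤ 100/s := by
  have hπ0 := Real.pi_pos
  have hπ4 := Real.pi_le_four
  have hs0 : (0:ℝ) < s := by linarith
  have hq0 : (0:ℝ) < q := by linarith
  have hn0 : (0:ℝ) < n := by nlinarith
  have h1 : 2*π/q ≤ 8/s := by
    rw [div_le_div_iff₀ hq0 hs0]
    nlinarith
  have h2 : q*SK ≤ 24/s := by
    rw [le_div_iff₀ hs0]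
    have e : 2*n*(π/n + π^2/(2*n)) = 2*π + π^2 := by field_simp
    have c1 : q*SK*s ≤ (2*s)*SK*s := by
      apply mul_le_mul_of_nonneg_right (mul_le_mul_of_nonneg_right hq2 hSK0) hs0.le
    have c2 : (2*s)*SK*s = 2*n*SK := by rw [← hn]; ring
    have c3 : 2*n*SK ≤ 2*n*(π/n + π^2/(2*n)) := by
      apply mul_le_mul_of_nonneg_left hSK (by positivity)
    nlinarith
  have h3 : Δ ≤ 4/s := by
    have : π/s ≤ 4/s := by
      apply div_le_div_of_nonneg_right hπ4 hs0.le
    linarith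
  have h4 : (4:ℝ)/s + 2*(8/s) + 4/s + 24/s = 48/s := by ring
  have h5 : (48:ℝ)/s ≤ 100/s := by
    apply div_le_div_of_nonneg_right (by norm_num) hs0.le
  linarith

lemma aux_cos4 {s n : ℝ} (hs : 50 ≤ s) (hsn : s^2 = n) : Real.cos (4/s) ≤ 1 - 1/n := by
  have hπ0 := Real.pi_pos
  have hπ4 := Real.pi_le_four
  have hπ3 := Real.pi_gt_three
  have hs0 : (0:ℝ) < s := by linarith
  have h1 : (0:ℝ) ≤ 4/s := by positivity
  have h2 : 4/s ≤ π := by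
    have : 4/s ≤ 4/50 := div_le_div_of_nonneg_left (by norm_num) (by norm_num) hs
    linarith
  have h := two_sub_two_cos_ge h1 h2
  have e : (2/π*(4/s))^2 = 64/(π^2*s^2) := by
    field_simp
    ring
  have h3 : 2/(s^2) ≤ 64/(π^2*s^2) := by
    rw [div_le_div_iff₀ (by positivity) (by positivity)]
    have hπ16 : π^2 ≤ 16 := by nlinarith
    nlinarith [sq_nonneg s, mul_le_mul_of_nonneg_right hπ16 (sq_nonneg s)]
  have e4 : 2/(s^2) = 2*(1/(s^2)) := by ring
  rw [← hsn]
  linarith [h, e ▸ h, h3]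

set_option maxHeartbeats 3000000 in
lemma cov_main {N : ℕ} (hN : 2500 ≤ N) (y : E3) (hy : dist y (0:E3) = 1) :
    ∃ k : ℕ, k ∈ Set.Icc 1 N ∧ dist y (spiralPt N k) ≤ 100 / Real.sqrt N := by
  have hπ0 := Real.pi_pos
  have hπ4 := Real.pi_le_four
  have hπ3 := Real.pi_gt_three
  have hNr : (2500:ℝ) ≤ N := by exact_mod_cast hN
  have hN0 : (0:ℝ) < N := by linarith
  obtain ⟨s, hs⟩ : ∃ x, x = Real.sqrt (N:ℝ) := ⟨_, rfl⟩
  have hs50 : 50 ≤ s := by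
    rw [hs, show (50:ℝ) = Real.sqrt 2500 by
      rw [show (2500:ℝ) = 50^2 by norm_num, Real.sqrt_sq (by norm_num : (0:ℝ) ≤ 50)]]
    exact Real.sqrt_le_sqrt hNr
  have hs0 : (0:ℝ) < s := by linarith
  have hsn : s^2 = (N:ℝ) := by rw [hs]; exact Real.sq_sqrt hN0.le
  obtain ⟨q, hq⟩ : ∃ x, x = Real.sqrt ((N:ℝ)*π) := ⟨_, rfl⟩
  have hq0 : 0 < q := by rw [hq]; positivity
  have hqs : q = s*Real.sqrt π := by rw [hq, hs, Real.sqrt_mul hN0.le]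
  have hsπ1 : 1 ≤ Real.sqrt π := by
    rw [show (1:ℝ) = Real.sqrt 1 by simp]
    exact Real.sqrt_le_sqrt (by linarith)
  have hsπ4 : Real.sqrt π ≤ 2 := by
    rw [show (2:ℝ) = Real.sqrt 4 by
      rw [show (4:ℝ) = 2^2 by norm_num, Real.sqrt_sq (by norm_num : (0:ℝ) ≤ 2)]]
    exact Real.sqrt_le_sqrt hπ4
  have hq1 : s ≤ q := by
    rw [hqs]
    have h := mul_nonneg hs0.le (by linarith : (0:ℝ) ≤ Real.sqrt π - 1)
    linarith only [h]
  have hq2 : q ≤ 2*s := by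
    rw [hqs]
    have h := mul_nonneg hs0.le (by linarith : (0:ℝ) ≤ 2 - Real.sqrt π)
    linarith only [h]
  have hφ1cos : Real.cos (spiralPhi N 1) = 1 - 1/(N:ℝ) := by
    have h := spiralPhi_cos (N := N) (k := 1) (by omega) le_rfl (by omega)
    rw [h]; norm_num
  have hφ10 : 0 ≤ spiralPhi N 1 := Real.arccos_nonneg _
  have hφ1π : spiralPhi N 1 ≤ π := Real.arccos_le_pi _
  have hφN0 : 0 ≤ spiralPhi N N := Real.arccos_nonneg _
  have hφNπ : spiralPhi N N ≤ π := Real.arccos_le_pi _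
  have hφ1le : spiralPhi N 1 ≤ 4/s := by
    have h1 : (0:ℝ) ≤ 4/s := by positivity
    have h2 : 4/s ≤ π := by
      have : 4/s ≤ 4/50 := div_le_div_of_nonneg_left (by norm_num) (by norm_num) hs50
      linarith
    apply arccos_le_of_cos_le h1 h2
    have := aux_cos4 hs50 hsn
    have e : (2*((1:ℕ):ℝ)-1)/N = 1/(N:ℝ) := by norm_num
    rw [e]
    exact this
  have hφN : spiralPhi N N = π - spiralPhi N 1 := by
    unfold spiralPhi
    have e : 1 - (2*(N:ℝ)-1)/N = -(1 - (2*((1:ℕ):ℝ)-1)/N) := by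
      field_simp
      ring
    rw [e, Real.arccos_neg]
  have hG0 : 0 < 2*π/q := by positivity
  have hG8 : 2*π/q ≤ 8/s := by
    rw [div_le_div_iff₀ hq0 hs0]
    have h := mul_nonneg (by linarith : (0:ℝ) ≤ 8 - 2*π) hs0.le
    linarith only [h, hq1]
  have h4s : (4:ℝ)/s ≤ 4/50 := div_le_div_of_nonneg_left (by norm_num) (by norm_num) hs50
  have h8s : (8:ℝ)/s ≤ 8/50 := div_le_div_of_nonneg_left (by norm_num) (by norm_num) hs50
  have h4s0 : (0:ℝ) < 4/s := by positivity
  obtain ⟨φs, θs, hφs0, hφsπ, hyeq⟩ := sp_coords y (mem_S2_sum hy)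
  obtain ⟨α, hα⟩ : ∃ x, x = min (max φs (spiralPhi N 1)) (spiralPhi N N - 2*π/q) := ⟨_, rfl⟩
  have hord : spiralPhi N 1 + 2*π/q ≤ spiralPhi N N := by
    rw [hφN]
    linarith
  have hα1 : spiralPhi N 1 ≤ α := by
    rw [hα]; exact le_min (le_max_right _ _) (by linarith)
  have hα2 : α + 2*π/q ≤ spiralPhi N N := by
    have h := min_le_right (max φs (spiralPhi N 1)) (spiralPhi N N - 2*π/q)
    rw [← hα] at h; linarith
  have hαu : α ≤ φs + 4/s := by
    have h := min_le_left (max φs (spiralPhi N 1)) (spiralPhi N N - 2*π/q)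
    rw [← hα] at h
    have h2 : max φs (spiralPhi N 1) ≤ φs + 4/s :=
      max_le (by linarith) (by linarith)
    linarith
  have hαl : φs - (4/s + 2*π/q) ≤ α := by
    rw [hα]
    apply le_min
    · have : φs - (4/s + 2*π/q) ≤ φs := by linarith
      exact le_trans this (le_max_left _ _)
    · rw [hφN]; linarith
  obtain ⟨t, ht1, ht2, htc, hts⟩ := aux_t q θs α hq0
  have htlo : spiralPhi N 1 ≤ t := le_trans hα1 ht1
  have hthi : t ≤ spiralPhi N N := by linarith
  have ht0 : 0 ≤ t := le_trans hφ10 htlo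
  have htπ : t ≤ π := by linarith
  have hB0 : (0:ℝ) ≤ 4/s + 2*(2*π/q) := by linarith
  have habs : (φs - t)^2 ≤ (4/s + 2*(2*π/q))^2 := by
    apply sq_le_sq' <;> linarith
  have hdA : dist (sp φs θs) (sp t (q*t)) ≤ 4/s + 2*(2*π/q) := aux_dA htc hts habs hB0
  -- choose k
  obtain ⟨v, hv⟩ : ∃ x, x = ((N:ℝ)*(1-Real.cos t)+1)/2 := ⟨_, rfl⟩
  have hct1 : Real.cos t ≤ 1 - 1/(N:ℝ) := by
    rw [← hφ1cos]
    exact Real.cos_le_cos_of_nonneg_of_le_pi hφ10 htπ htlo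
  have hct2 : 1/(N:ℝ) - 1 ≤ Real.cos t := by
    have h := Real.cos_le_cos_of_nonneg_of_le_pi ht0 hφNπ hthi
    rw [hφN, Real.cos_pi_sub, hφ1cos] at h
    linarith
  have hNinv : (N:ℝ)*(1/N) = 1 := by field_simp
  have hv1 : 1 ≤ v := by
    rw [hv]
    have h := mul_le_mul_of_nonneg_left (by linarith : 1/(N:ℝ) ≤ 1 - Real.cos t) hN0.le
    linarith [hNinv, h]
  have hvN : v ≤ N := by
    rw [hv]
    have h := mul_le_mul_of_nonneg_left (by linarith : 1 - Real.cos t ≤ 2 - 1/(N:ℝ)) hN0.le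
    have e : (N:ℝ)*(2 - 1/N) = 2*N - 1 := by field_simp; try ring
    linarith [h, e]
  obtain ⟨k, hk⟩ : ∃ k : ℕ, (k:ℤ) = ⌊v⌋ :=
    ⟨⌊v⌋.toNat, Int.toNat_of_nonneg (by
      have : (1:ℤ) ≤ ⌊v⌋ := Int.le_floor.2 (by exact_mod_cast hv1)
      omega)⟩
  have hk1 : 1 ≤ k := by
    have h : (1:ℤ) ≤ ⌊v⌋ := Int.le_floor.2 (by exact_mod_cast hv1)
    omega
  have hkv : (k:ℝ) ≤ v := by
    have := Int.floor_le v
    rw [← hk] at this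
    exact_mod_cast this
  have hkv2 : v < (k:ℝ) + 1 := by
    have := Int.lt_floor_add_one v
    rw [← hk] at this
    exact_mod_cast this
  have hkN : k ≤ N := by
    have : (k:ℝ) ≤ (N:ℝ) := le_trans hkv hvN
    exact_mod_cast this
  have hkc : Real.cos (spiralPhi N k) = 1 - (2*(k:ℝ)-1)/N :=
    spiralPhi_cos (by omega) hk1 hkN
  have hcoseq : Real.cos t = 1 - (2*v-1)/(N:ℝ) := by
    rw [hv]; field_simp; ring
  have hφk0 : 0 ≤ spiralPhi N k := Real.arccos_nonneg _
  have hφkπ : spiralPhi N k ≤ π := Real.arccos_le_pi _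
  have hsub : Real.cos (spiralPhi N k) - Real.cos t = (2*v - 2*(k:ℝ))/N := by
    rw [hkc, hcoseq]
    field_simp
    try ring
  have hdk0 : 0 ≤ Real.cos (spiralPhi N k) - Real.cos t := by
    rw [hsub]
    apply div_nonneg (by linarith) hN0.le
  have hdk2 : Real.cos (spiralPhi N k) - Real.cos t ≤ 2/(N:ℝ) := by
    rw [hsub]
    apply div_le_div_of_nonneg_right (by linarith) hN0.le
  have hφkt : spiralPhi N k ≤ t := by
    by_contra h'
    push_neg at h'
    have := Real.strictAntiOn_cos ⟨ht0, htπ⟩ ⟨hφk0, hφkπ⟩ h'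
    linarith
  obtain ⟨hA, hB⟩ := aux_covB hN0 hφk0 hφkt htπ hdk2
  have hΔ0 : 0 ≤ t - spiralPhi N k := by linarith
  have hΔle : t - spiralPhi N k ≤ π/s := by
    apply le_of_sq_le' _ (by positivity)
    have e : (π/s)^2 = π^2/(N:ℝ) := by rw [div_pow, hsn]
    rw [e]
    exact hA
  have hsφk0 : 0 ≤ Real.sin (spiralPhi N k) :=
    Real.sin_nonneg_of_nonneg_of_le_pi hφk0 hφkπ
  have htheta : spiralTheta N k = q*(spiralPhi N k) := by rw [hq]; rfl
  have hdB : dist (sp t (q*t)) (spiralPt N k)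
      ≤ (t - spiralPhi N k) + q*(Real.sin (spiralPhi N k)*(t - spiralPhi N k)) := by
    rw [spiralPt_eq_sp]
    have step := dist_triangle (sp t (q*t)) (sp (spiralPhi N k) (q*t))
      (sp (spiralPhi N k) (spiralTheta N k))
    have s1 : dist (sp t (q*t)) (sp (spiralPhi N k) (q*t)) ≤ t - spiralPhi N k := by
      have := dist_sp_same_theta t (spiralPhi N k) (q*t)
      rwa [abs_of_nonneg hΔ0] at this
    have s2 : dist (sp (spiralPhi N k) (q*t)) (sp (spiralPhi N k) (spiralTheta N k))
        ≤ q*(Real.sin (spiralPhi N k)*(t - spiralPhi N k)) := by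
      rw [htheta]
      have h := dist_sp_same_phi (spiralPhi N k) (q*t) (q*spiralPhi N k) hsφk0
      rw [show q*t - q*spiralPhi N k = q*(t - spiralPhi N k) by ring,
        abs_of_nonneg (mul_nonneg hq0.le hΔ0)] at h
      calc dist (sp (spiralPhi N k) (q*t)) (sp (spiralPhi N k) (q*spiralPhi N k))
          ≤ Real.sin (spiralPhi N k) * (q*(t - spiralPhi N k)) := h
        _ = q*(Real.sin (spiralPhi N k)*(t - spiralPhi N k)) := by ring
    linarith
  have hSK : Real.sin (spiralPhi N k)*(t - spiralPhi N k) ≤ π/(N:ℝ) + π^2/(2*(N:ℝ)) := by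
    have e : (t - spiralPhi N k)^2/2 ≤ π^2/(2*(N:ℝ)) := by
      rw [div_le_div_iff₀ (by norm_num) (by positivity)]
      have eA : (N:ℝ)*(π^2/N) = π^2 := by field_simp
      have h := mul_le_mul_of_nonneg_left hA hN0.le
      linarith only [h, eA]
    linarith only [e, hB]
  have hSK0 : 0 ≤ Real.sin (spiralPhi N k)*(t - spiralPhi N k) :=
    mul_nonneg hsφk0 hΔ0
  have htot := aux_total (φ1 := 4/s) hs50 hsn hq1 hq2 hΔle hΔ0 hSK0 hSK le_rfl
  have hdist : dist y (spiralPt N k) ≤ 100/s := by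
    have htri := dist_triangle y (sp t (q*t)) (spiralPt N k)
    rw [hyeq] at htri ⊢
    linarith
  refine ⟨k, ⟨hk1, hkN⟩, ?_⟩
  rw [← hs]
  exact hdist


lemma spiralPt_mem {N k : ℕ} (h1 : 1 ≤ k) (h2 : k ≤ N) : spiralPt N k ∈ spiralCfg N :=
  ⟨k, Set.mem_Icc.2 ⟨h1, h2⟩, rfl⟩

lemma spiralPt_one_ne_two {N : ℕ} (hN : 2 ≤ N) : spiralPt N 1 ≠ spiralPt N 2 := by
  intro h
  have hN0 : (0:ℝ) < N := by exact_mod_cast Nat.lt_of_lt_of_le Nat.zero_lt_two hN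
  have hc : Real.cos (spiralPhi N 1) = Real.cos (spiralPhi N 2) :=
    congrArg (fun v : E3 => v 2) h
  rw [spiralPhi_cos (by omega) le_rfl (by omega),
    spiralPhi_cos (by omega) (by omega) hN] at hc
  have h3 : (2*((1:ℕ):ℝ)-1)/N = (2*((2:ℕ):ℝ)-1)/N := by linarith
  rw [div_eq_div_iff hN0.ne' hN0.ne'] at h3
  push_cast at h3
  nlinarith

/-- The sequence of generalized spiral configurations is quasi-uniform: there are
constants `c, C > 0` with `δ(ω_N) ≥ c·N^{-1/2}` and `η(ω_N) ≤ C·N^{-1/2}` for all `N ≥ 2`. -/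
theorem spiral_quasiUniform :
    ∃ c > (0 : ℝ), ∃ C > (0 : ℝ), ∀ N : ℕ, 2 ≤ N →
      c / Real.sqrt N ≤ separation (spiralCfg N) ∧
      covering (spiralCfg N) ≤ C / Real.sqrt N := by
  refine ⟨1/2, by norm_num, 100, by norm_num, fun N hN => ⟨?_, ?_⟩⟩
  · -- separation
    apply le_csInf
    · exact ⟨dist (spiralPt N 1) (spiralPt N 2),
        ⟨(spiralPt N 1, spiralPt N 2),
          ⟨spiralPt_mem le_rfl (by omega), spiralPt_mem (by omega) hN,
            spiralPt_one_ne_two hN⟩, rfl⟩⟩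
    · rintro b ⟨⟨p1, p2⟩, ⟨⟨j, hj, rfl⟩, ⟨k, hk, rfl⟩, hne⟩, rfl⟩
      simp only [Set.mem_Icc] at hj hk
      have hjk : j ≠ k := by rintro rfl; exact hne rfl
      rcases lt_or_gt_of_ne hjk with h | h
      · exact sep_main hN hj.1 h hk.2
      · have := sep_main hN hk.1 h hj.2
        rwa [dist_comm] at this
  · -- covering
    have hN0 : (0:ℝ) < N := by exact_mod_cast Nat.lt_of_lt_of_le Nat.zero_lt_two hN
    have hsN0 : 0 < Real.sqrt N := Real.sqrt_pos.2 hN0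
    apply Real.sSup_le
    · rintro x ⟨y, hyS2, rfl⟩
      have hy : dist y (0:E3) = 1 := Metric.mem_sphere.1 hyS2
      rcases le_or_gt 2500 N with hbig | hsmall
      · obtain ⟨k, hk, hd⟩ := cov_main hbig y hy
        calc Metric.infDist y (spiralCfg N) ≤ dist y (spiralPt N k) :=
              Metric.infDist_le_dist_of_mem (spiralPt_mem hk.1 hk.2)
          _ ≤ 100 / Real.sqrt N := hd
      · have h1 : Metric.infDist y (spiralCfg N) ≤ dist y (spiralPt N 1) :=
          Metric.infDist_le_dist_of_mem (spiralPt_mem le_rfl (by omega))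
        have h2 : dist y (spiralPt N 1) ≤ 2 := by
          calc dist y (spiralPt N 1) ≤ dist y (0:E3) + dist (0:E3) (spiralPt N 1) :=
                dist_triangle _ _ _
            _ = 1 + 1 := by
                rw [hy, dist_comm, spiralPt_eq_sp, sp_dist_zero]
            _ = 2 := by norm_num
        have h3 : Real.sqrt N ≤ 50 := by
          rw [show (50:ℝ) = Real.sqrt 2500 by
            rw [show (2500:ℝ) = 50^2 by norm_num, Real.sqrt_sq (by norm_num : (0:ℝ) ≤ 50)]]
          exact Real.sqrt_le_sqrt (by exact_mod_cast hsmall.le)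
        have h4 : (2:ℝ) ≤ 100 / Real.sqrt N := by
          rw [le_div_iff₀ hsN0]
          linarith
        linarith
    · positivity

end
end

section
/- For all integers k ≥ 1 and 1 ≤ i ≤ k, one has 2·√(2i²/(3k²) − i⁴/(9k⁴))·sin(π/(4i)) ≥ √10/(3k). -/
open Real

lemma sin_div_ge (a : ℝ) (ha : 1 ≤ a) : Real.sin (π/4) / a ≤ Real.sin (π / (4 * a)) := by
  have ha0 : 0 < a := lt_of_lt_of_le one_pos ha
  have ht0 : 0 < 1 / a := by positivity
  have ht1 : 1 / a ≤ 1 := by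
    rw [div_le_one ha0]; exact ha
  have hconc := strictConcaveOn_sin_Icc.concaveOn
  have h0 : (0:ℝ) ∈ Set.Icc 0 π := ⟨le_refl 0, Real.pi_pos.le⟩
  have h4 : π/4 ∈ Set.Icc 0 π := ⟨by positivity, by linarith [Real.pi_pos.le]⟩
  have key := hconc.2 h0 h4 (by linarith : (0:ℝ) ≤ 1 - 1/a) ht0.le (by ring)
  simp only [smul_eq_mul, mul_zero, zero_add, Real.sin_zero] at key
  have : π / (4 * a) = 1 / a * (π / 4) := by ring
  rw [this]
  calc Real.sin (π/4) / a = 1/a * Real.sin (π/4) := by ring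
    _ ≤ Real.sin (1/a * (π/4)) := key

/-- Within-ring separation of the HEALPix nodes in the polar region: for all integers
`k ≥ 1` and `1 ≤ i ≤ k`, the distance `2·r_i·sin(π/(4i))` between adjacent points on
the `i`-th polar ring, of radius `r_i = √(2i²/(3k²) − i⁴/(9k⁴))` carrying `4i` equally
spaced points, is at least `√10/(3k)`. -/
theorem healpix_polar_ring_separation (k i : ℕ) (hk : 1 ≤ k) (hi : 1 ≤ i)
    (hik : i ≤ k) :
    Real.sqrt 10 / (3 * (k : ℝ)) ≤
      2 * Real.sqrt (2 * (i : ℝ) ^ 2 / (3 * (k : ℝ) ^ 2) - (i : ℝ) ^ 4 / (9 * (k : ℝ) ^ 4))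
        * Real.sin (π / (4 * (i : ℝ))) := by
  set a : ℝ := (i : ℝ) with hadef
  set b : ℝ := (k : ℝ) with hbdef
  have ha : 1 ≤ a := by rw [hadef]; exact_mod_cast hi
  have hb : 1 ≤ b := by rw [hbdef]; exact_mod_cast hk
  have hab : a ≤ b := by rw [hadef, hbdef]; exact_mod_cast hik
  have ha0 : 0 < a := by linarith
  have hb0 : 0 < b := by linarith
  -- sqrt bound
  have hsq : a * Real.sqrt 5 / (3 * b) ≤
      Real.sqrt (2 * a ^ 2 / (3 * b ^ 2) - a ^ 4 / (9 * b ^ 4)) := by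
    rw [show a * Real.sqrt 5 / (3 * b) = Real.sqrt 5 * (a / (3 * b)) by ring]
    rw [show Real.sqrt 5 * (a / (3*b)) = Real.sqrt (5 * (a/(3*b))^2) by
      rw [Real.sqrt_mul (by norm_num : (0:ℝ) ≤ 5), Real.sqrt_sq (by positivity)]]
    apply Real.sqrt_le_sqrt
    have h2 : a^2 ≤ b^2 := by nlinarith
    have h4 : a^4 ≤ a^2 * b^2 := by nlinarith
    rw [← sub_nonneg]
    have heq : 2 * a ^ 2 / (3 * b ^ 2) - a ^ 4 / (9 * b ^ 4) - 5 * (a / (3 * b)) ^ 2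
        = (a^2 * b^2 - a^4) / (9 * b^4) := by field_simp; ring
    rw [heq]
    apply div_nonneg (by linarith) (by positivity)
  -- sin bound
  have hsin := sin_div_ge a ha
  rw [Real.sin_pi_div_four] at hsin
  have hsin0 : 0 < Real.sqrt 2 / 2 / a := by positivity
  have hsqrt0 : 0 ≤ a * Real.sqrt 5 / (3 * b) := by positivity
  calc Real.sqrt 10 / (3 * b)
      = 2 * (a * Real.sqrt 5 / (3 * b)) * (Real.sqrt 2 / 2 / a) := by
        rw [show (10:ℝ) = 5 * 2 by norm_num, Real.sqrt_mul (by norm_num : (0:ℝ) ≤ 5)]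
        field_simp
    _ ≤ 2 * Real.sqrt (2 * a ^ 2 / (3 * b ^ 2) - a ^ 4 / (9 * b ^ 4))
        * Real.sin (π / (4 * a)) := by
        apply mul_le_mul
        · linarith
        · exact hsin
        · positivity
        · positivity
end
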